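/- arXiv:1605.03172 — 2 statements merged into one kernel-verified Lean document; each statement's English description precedes it below -/
import Mathlib

section
/- Let A ⊆ [n] with |A| = K·r_k(n) where K ≥ 2 is such that 2·r_k(n) ≤ |A|. Then the number of k-term arithmetic progressions in A satisfies Γ_k(A) ≥ (K/2)^k · r_k(n). -/
open Finset

/-- The `k`-term arithmetic progression with first term `a` and common difference `d`. -/
def AP (k a d : ℕ) : Finset ℕ := (Finset.range k).image fun i => a + i * d

/-- A finite set of naturals is `k`-AP-free if it contains no `k`-term arithmetic
progression with positive common difference. -/
def APFree (k : ℕ) (S : Finset ℕ) : Prop := ∀ a d : ℕ, 1 ≤ d → ¬ AP k a d ⊆ S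

open Classical in
/-- `rk k n` is the maximum size of a `k`-AP-free subset of `[n] = {1,…,n}`. -/
noncomputable def rk (k n : ℕ) : ℕ :=
  ((Finset.Icc 1 n).powerset.filter fun S => APFree k S).sup Finset.card

/-- `Gamma k A` is the number of `k`-term arithmetic progressions (with positive
common difference) contained in `A`, counted as pairs (first term, difference). -/
noncomputable def Gamma (k : ℕ) (A : Finset ℕ) : ℕ :=
  Set.ncard {q : ℕ × ℕ | 1 ≤ q.2 ∧ AP k q.1 q.2 ⊆ A}

/-- Finset of AP pairs inside `S`, with ambient bound `n`. -/
def APs (k n : ℕ) (S : Finset ℕ) : Finset (ℕ × ℕ) :=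
  (Finset.Icc 1 n ×ˢ Finset.Icc 1 n).filter fun q => 1 ≤ q.2 ∧ AP k q.1 q.2 ⊆ S

lemma mem_AP {k i : ℕ} (hi : i < k) (a d : ℕ) : a + i * d ∈ AP k a d :=
  Finset.mem_image.2 ⟨i, Finset.mem_range.2 hi, rfl⟩

lemma card_AP {k a d : ℕ} (hd : 1 ≤ d) : (AP k a d).card = k := by
  rw [AP, Finset.card_image_of_injective, Finset.card_range]
  intro i j h
  simp only at h
  exact Nat.eq_of_mul_eq_mul_right hd (Nat.add_left_cancel h)

lemma card_le_rk {k n : ℕ} {S : Finset ℕ} (hS : S ⊆ Finset.Icc 1 n) (hfree : APFree k S) :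
    S.card ≤ rk k n := by
  classical
  exact Finset.le_sup (f := Finset.card)
    (Finset.mem_filter.2 ⟨Finset.mem_powerset.2 hS, hfree⟩)

lemma rk_eq_zero {k n : ℕ} (hk : k ≤ 1) : rk k n = 0 := by
  classical
  rw [rk, Finset.sup_eq_zero]
  intro S hS
  rw [Finset.mem_filter] at hS
  by_contra h
  obtain ⟨x, hx⟩ := Finset.card_pos.1 (Nat.pos_of_ne_zero h)
  interval_cases k
  · exact hS.2 0 1 le_rfl (by simp [AP])
  · exact hS.2 x 1 le_rfl (by simp [AP]; simpa using hx)

lemma exists_ap {k n : ℕ} {S : Finset ℕ} (hS : S ⊆ Finset.Icc 1 n)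
    (h : rk k n < S.card) : ∃ a d : ℕ, 1 ≤ d ∧ AP k a d ⊆ S := by
  by_contra hc
  push_neg at hc
  exact absurd (card_le_rk hS fun a d hd => hc a d hd) (by omega)

lemma pair_mem {k n : ℕ} (hk : 2 ≤ k) {S : Finset ℕ} (hS : S ⊆ Finset.Icc 1 n)
    {a d : ℕ} (hd : 1 ≤ d) (hap : AP k a d ⊆ S) :
    (a, d) ∈ APs k n S := by
  have h0 : a ∈ Finset.Icc 1 n := hS (hap (by simpa using mem_AP (by omega : 0 < k) a d))
  have h1 : a + 1 * d ∈ Finset.Icc 1 n := hS (hap (mem_AP (by omega : 1 < k) a d))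
  rw [Finset.mem_Icc] at h0 h1
  exact Finset.mem_filter.2 ⟨Finset.mem_mk.1 (by
    exact Finset.mem_product.2 ⟨Finset.mem_Icc.2 ⟨h0.1, h0.2⟩, Finset.mem_Icc.2 ⟨hd, by omega⟩⟩),
    hd, hap⟩

lemma APs_mono {k n : ℕ} {S T : Finset ℕ} (h : S ⊆ T) : APs k n S ⊆ APs k n T := by
  intro q hq
  rw [APs, Finset.mem_filter] at hq ⊢
  exact ⟨hq.1, hq.2.1, hq.2.2.trans h⟩

/-- Greedy lemma: any `S ⊆ [n]` contains at least `|S| - rk k n` many `k`-APs. -/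
lemma greedy {k n : ℕ} (hk : 2 ≤ k) (S : Finset ℕ) (hS : S ⊆ Finset.Icc 1 n) :
    S.card - rk k n ≤ (APs k n S).card := by
  induction S using Finset.strongInductionOn with
  | _ S ih =>
  by_cases h : S.card ≤ rk k n
  · simp [Nat.sub_eq_zero_of_le h]
  · push_neg at h
    obtain ⟨a, d, hd, hap⟩ := exists_ap hS h
    have ha : a ∈ S := hap (by simpa using mem_AP (by omega : 0 < k) a d)
    have hsub : APs k n (S.erase a) ⊆ (APs k n S).erase (a, d) := by
      intro q hq
      refine Finset.mem_erase.2 ⟨?_, APs_mono (Finset.erase_subset _ _) hq⟩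
      rintro rfl
      rw [APs, Finset.mem_filter] at hq
      exact (Finset.notMem_erase a S) (hq.2.2 (by simpa using mem_AP (by omega : 0 < k) a d))
    have hIH := ih (S.erase a) (Finset.erase_ssubset ha)
      ((Finset.erase_subset _ _).trans hS)
    have hce : (S.erase a).card = S.card - 1 := Finset.card_erase_of_mem ha
    have hmem := pair_mem hk hS hd hap
    have h2 : ((APs k n S).erase (a, d)).card = (APs k n S).card - 1 :=
      Finset.card_erase_of_mem hmem
    have h3 := Finset.card_le_card hsub
    have h4 : 1 ≤ (APs k n S).card := Finset.card_pos.2 ⟨_, hmem⟩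
    omega

/-- Number of `m`-subsets of `A` containing a fixed subset `B`. -/
lemma card_supersets {A B : Finset ℕ} (hB : B ⊆ A) {m : ℕ} (hm : B.card ≤ m) :
    ((A.powersetCard m).filter fun T => B ⊆ T).card
      = (A.card - B.card).choose (m - B.card) := by
  rw [show (A.card - B.card).choose (m - B.card) = ((A \ B).powersetCard (m - B.card)).card by
    rw [Finset.card_powersetCard, Finset.card_sdiff_of_subset hB]]
  apply Finset.card_bij (fun T _ => T \ B)
  · intro T hT
    rw [Finset.mem_filter, Finset.mem_powersetCard] at hT
    rw [Finset.mem_powersetCard]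
    refine ⟨Finset.sdiff_subset_sdiff hT.1.1 Finset.Subset.rfl, ?_⟩
    rw [Finset.card_sdiff_of_subset hT.2, hT.1.2]
  · intro T hT T' hT' h
    rw [Finset.mem_filter] at hT hT'
    rw [← Finset.sdiff_union_of_subset hT.2, ← Finset.sdiff_union_of_subset hT'.2, h]
  · intro U hU
    rw [Finset.mem_powersetCard] at hU
    have hdisj : Disjoint U B := Finset.disjoint_of_subset_left hU.1 Finset.sdiff_disjoint
    refine ⟨U ∪ B, Finset.mem_filter.2 ⟨Finset.mem_powersetCard.2
      ⟨Finset.union_subset (hU.1.trans (Finset.sdiff_subset)) hB, ?_⟩,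
      Finset.subset_union_right⟩, ?_⟩
    · rw [Finset.card_union_of_disjoint hdisj, hU.2]
      omega
    · rw [Finset.union_sdiff_right, Finset.sdiff_eq_self_of_disjoint hdisj]

/-- Ratio lemma in ℕ. -/
lemma choose_ratio {N m : ℕ} (hm : m ≤ N) : ∀ j ≤ m,
    N ^ j * ((N - j).choose (m - j)) ≤ m ^ j * N.choose m := by
  intro j
  induction j with
  | zero => simp
  | succ j ih =>
    intro hj
    have hjm : j < m := hj
    have hj' := ih hjm.le
    have hNj : j < N := lt_of_lt_of_le hjm hm
    -- identity : (N - j) * C(N-j-1, m-j-1) = C(N-j, m-j) * (m-j)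
    have hid : (N - j) * (N - j - 1).choose (m - j - 1) = (N - j).choose (m - j) * (m - j) := by
      have := Nat.add_one_mul_choose_eq (N - j - 1) (m - j - 1)
      have e1 : N - j - 1 + 1 = N - j := by omega
      have e2 : m - j - 1 + 1 = m - j := by omega
      rwa [e1, e2] at this
    -- key step : N * C(N-j-1, m-j-1) ≤ m * C(N-j, m-j)
    have hkey : N * (N - j - 1).choose (m - j - 1) ≤ m * (N - j).choose (m - j) := by
      have h1 : (m - j) * (N * (N - j - 1).choose (m - j - 1))
          ≤ (m - j) * (m * (N - j).choose (m - j)) := by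
        have : N * (m - j) ≤ m * (N - j) := by
          rw [Nat.mul_sub, Nat.mul_sub]
          have h1 : m * j ≤ N * j := Nat.mul_le_mul_right j hm
          calc N * m - N * j ≤ N * m - m * j := Nat.sub_le_sub_left h1 _
            _ = m * N - m * j := by rw [Nat.mul_comm]
        calc (m - j) * (N * (N - j - 1).choose (m - j - 1))
            = (N * (m - j)) * (N - j - 1).choose (m - j - 1) := by ring
          _ ≤ (m * (N - j)) * (N - j - 1).choose (m - j - 1) :=
              Nat.mul_le_mul_right _ this
          _ = m * ((N - j) * (N - j - 1).choose (m - j - 1)) := by ring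
          _ = m * ((N - j).choose (m - j) * (m - j)) := by rw [hid]
          _ = (m - j) * (m * (N - j).choose (m - j)) := by ring
      exact Nat.le_of_mul_le_mul_left h1 (by omega)
    calc N ^ (j + 1) * ((N - (j + 1)).choose (m - (j + 1)))
        = N ^ j * (N * ((N - j - 1).choose (m - j - 1))) := by
          rw [pow_succ]; ring_nf
          congr 2 <;> omega
      _ ≤ N ^ j * (m * (N - j).choose (m - j)) := Nat.mul_le_mul_left _ hkey
      _ = m * (N ^ j * (N - j).choose (m - j)) := by ring
      _ ≤ m * (m ^ j * N.choose m) := Nat.mul_le_mul_left _ hj'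
      _ = m ^ (j + 1) * N.choose m := by ring

lemma double_count {k n m : ℕ} (hk : 2 ≤ k) (hkm : k ≤ m) {A : Finset ℕ}
    (hA : A ⊆ Finset.Icc 1 n) (hmA : m ≤ A.card) :
    (m - rk k n) * A.card.choose m ≤ (APs k n A).card * ((A.card - k).choose (m - k)) := by
  classical
  have step1 : ∀ T ∈ A.powersetCard m,
      APs k n T = (APs k n A).filter fun q => AP k q.1 q.2 ⊆ T := by
    intro T hT
    rw [Finset.mem_powersetCard] at hT
    ext q
    simp only [APs, Finset.mem_filter]
    constructor
    · rintro ⟨hq, hd, hap⟩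
      exact ⟨⟨hq, hd, hap.trans hT.1⟩, hap⟩
    · rintro ⟨⟨hq, hd, _⟩, hap⟩
      exact ⟨hq, hd, hap⟩
  have hswap : ∑ T ∈ A.powersetCard m, (APs k n T).card
      = ∑ q ∈ APs k n A, ((A.powersetCard m).filter fun T => AP k q.1 q.2 ⊆ T).card := by
    rw [Finset.sum_congr rfl fun T hT => by rw [step1 T hT]]
    simp_rw [Finset.card_filter]
    rw [Finset.sum_comm]
  have hupper : ∑ T ∈ A.powersetCard m, (APs k n T).card
      ≤ (APs k n A).card * ((A.card - k).choose (m - k)) := by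
    rw [hswap]
    rw [Finset.sum_congr rfl fun q hq => ?_]
    · rw [Finset.sum_const, smul_eq_mul]
    · rw [APs, Finset.mem_filter] at hq
      rw [card_supersets (hq.2.2.trans (Finset.Subset.refl A)) (by rw [card_AP hq.2.1]; exact hkm),
        card_AP hq.2.1]
  have hlower : (m - rk k n) * A.card.choose m
      ≤ ∑ T ∈ A.powersetCard m, (APs k n T).card := by
    rw [← Finset.card_powersetCard, Nat.mul_comm, ← smul_eq_mul, ← Finset.sum_const]
    apply Finset.sum_le_sum
    intro T hT
    rw [Finset.mem_powersetCard] at hT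
    have := greedy hk T (hT.1.trans hA)
    rw [hT.2] at this
    exact this
  exact hlower.trans hupper

theorem sparsening_supersaturation (k n K : ℕ) (hK : 2 ≤ K) (A : Finset ℕ)
    (hA : A ⊆ Finset.Icc 1 n) (hcard : A.card = K * rk k n) :
    ((K : ℝ) / 2) ^ k * rk k n ≤ Gamma k A := by
  rcases Nat.eq_zero_or_pos (rk k n) with h0 | hrpos
  · rw [h0]
    simp [Nat.cast_nonneg]
  · have hk2 : 2 ≤ k := by
      by_contra h
      rw [rk_eq_zero (by omega)] at hrpos
      exact absurd hrpos (lt_irrefl 0)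
    set r := rk k n with hr
    have hmN : 2 * r ≤ K * r := Nat.mul_le_mul_right r hK
    obtain ⟨T, hTA, hTcard⟩ := Finset.exists_subset_card_eq (s := A) (n := 2 * r) (by rw [hcard]; exact hmN)
    have hkm : k ≤ 2 * r := by
      obtain ⟨a, d, hd, hap⟩ := exists_ap (k := k) (hTA.trans hA) (by rw [hTcard]; omega)
      calc k = (AP k a d).card := (card_AP hd).symm
        _ ≤ T.card := Finset.card_le_card hap
        _ = 2 * r := hTcard
    have hG : Gamma k A = (APs k n A).card := by
      rw [Gamma, ← Set.ncard_coe_finset]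
      congr 1
      ext q
      simp only [Set.mem_setOf_eq, Finset.mem_coe]
      constructor
      · rintro ⟨hd, hap⟩
        exact pair_mem hk2 hA hd hap
      · intro hq
        rw [APs, Finset.mem_filter] at hq
        exact hq.2
    have hdc := double_count hk2 hkm hA (by rw [hcard]; exact hmN)
    rw [hcard] at hdc
    have hmr : 2 * r - r = r := by omega
    rw [hmr] at hdc
    have hratio := choose_ratio hmN k hkm
    have hC' : 0 < (K * r - k).choose (2 * r - k) := Nat.choose_pos (by omega)
    have key : (K * r) ^ k * r ≤ (2 * r) ^ k * Gamma k A := by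
      rw [hG]
      have h1 : (K * r) ^ k * r * ((K * r - k).choose (2 * r - k))
          ≤ (2 * r) ^ k * (APs k n A).card * ((K * r - k).choose (2 * r - k)) := by
        calc (K * r) ^ k * r * ((K * r - k).choose (2 * r - k))
            = ((K * r) ^ k * ((K * r - k).choose (2 * r - k))) * r := by ring
          _ ≤ ((2 * r) ^ k * (K * r).choose (2 * r)) * r := Nat.mul_le_mul_right r hratio
          _ = (2 * r) ^ k * (r * (K * r).choose (2 * r)) := by ring
          _ ≤ (2 * r) ^ k * ((APs k n A).card * ((K * r - k).choose (2 * r - k))) :=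
              Nat.mul_le_mul_left _ hdc
          _ = (2 * r) ^ k * (APs k n A).card * ((K * r - k).choose (2 * r - k)) := by ring
      exact Nat.le_of_mul_le_mul_right h1 hC'
    have hm0 : (0:ℝ) < ((2 * r : ℕ) : ℝ) ^ k := by positivity
    have hKr : ((K : ℝ) / 2) = ((K * r : ℕ) : ℝ) / ((2 * r : ℕ) : ℝ) := by
      have hr0 : (0:ℝ) < (r : ℝ) := by exact_mod_cast hrpos
      push_cast
      field_simp
    rw [hKr, div_pow, div_mul_eq_mul_div, div_le_iff₀ hm0]
    have := key
    have keyR : (((K * r) ^ k * r : ℕ) : ℝ) ≤ (((2 * r) ^ k * Gamma k A : ℕ) : ℝ) := by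
      exact_mod_cast key
    push_cast at keyR ⊢
    linarith
end

section
/- Suppose T ⊆ ℤ_p has size t and the d-uniform Cayley sum-hypergraph G(ℤ_p, T) has independence number α < t/2, with 2t ≤ p. Then there exists a set F ⊆ ℤ_p of size at most 2t such that ℤ_p \ F is not equal to dA for any A ⊆ ℤ_p, i.e. f_d(p) ≤ 2t. -/
open Finset

/-- The `d`-fold sumset `dA = A + ⋯ + A` of a finite set `A ⊆ ℤ_p`. -/
def dfoldSum (p d : ℕ) (A : Finset (ZMod p)) : Finset (ZMod p) :=
  (Fintype.piFinset fun _ : Fin d => A).image fun f => ∑ i, f i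

/-- `A` is an independent set in the `d`-uniform Cayley sum-hypergraph `G(ℤ_p, T)`,
whose edges are the `d`-element sets with sum in `T`. -/
def IsIndepCayley (p d : ℕ) (T A : Finset (ZMod p)) : Prop :=
  ∀ e : Finset (ZMod p), e ⊆ A → e.card = d → e.sum id ∉ T

lemma smul_mem_dfoldSum (p d : ℕ) (A : Finset (ZMod p)) {a : ZMod p} (ha : a ∈ A) :
    d • a ∈ dfoldSum p d A := by
  classical
  refine Finset.mem_image.mpr ⟨fun _ => a, ?_, ?_⟩
  · exact Fintype.mem_piFinset.mpr fun _ => ha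
  · simp

lemma sum_mem_dfoldSum (p d : ℕ) (A e : Finset (ZMod p)) (he : e ⊆ A)
    (hcard : e.card = d) : e.sum id ∈ dfoldSum p d A := by
  classical
  have eqv : Fin d ≃ {x // x ∈ e} := (e.equivFinOfCardEq hcard).symm
  refine Finset.mem_image.mpr ⟨fun i => (eqv i : ZMod p), ?_, ?_⟩
  · exact Fintype.mem_piFinset.mpr fun i => he (eqv i).2
  · rw [Equiv.sum_comp eqv (fun x : {x // x ∈ e} => (x : ZMod p))]
    exact (Finset.sum_coe_sort e id)

theorem sumset_certificate (p d t : ℕ) [NeZero p] (hp : p.Prime) (hd : 2 ≤ d)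
    (T : Finset (ZMod p)) (hT : T.card = t) (h2t : 2 * t ≤ p)
    (hα : ∀ A : Finset (ZMod p), IsIndepCayley p d T A → 2 * A.card < t) :
    ∃ F : Finset (ZMod p), F.card ≤ 2 * t ∧
      ∀ A : Finset (ZMod p), Finset.univ \ F ≠ dfoldSum p d A := by
  classical
  by_contra hcon
  push_neg at hcon
  -- hcon : ∀ F, F.card ≤ 2 * t → ∃ A, univ \ F = dfoldSum p d A
  have hpcard : Fintype.card (ZMod p) = p := ZMod.card p
  -- t ≥ 1
  have ht1 : 1 ≤ t := by
    have h0 : IsIndepCayley p d T (∅ : Finset (ZMod p)) := by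
      intro e he hc
      have : e = ∅ := Finset.subset_empty.mp he
      subst this
      simp at hc
      omega
    have := hα ∅ h0
    simp at this
    omega
  -- any set of card ≤ d - 1 is independent; use it to show d < p
  have hsmall : 2 * min (d - 1) p < t := by
    obtain ⟨B, _, hB⟩ := Finset.exists_subset_card_eq
      (show min (d - 1) p ≤ (Finset.univ : Finset (ZMod p)).card by
        rw [Finset.card_univ, hpcard]; omega)
    have hBindep : IsIndepCayley p d T B := by
      intro e he hc
      have := Finset.card_le_card he
      rw [hc, hB] at this
      omega
    have := hα B hBindep
    rwa [hB] at this
  have hdp : d < p := by omega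
  have hd0 : (d : ZMod p) ≠ 0 := by
    intro h
    have hdvd : p ∣ d := (ZMod.natCast_eq_zero_iff d p).mp h
    have := Nat.le_of_dvd (by omega) hdvd
    omega
  haveI := Fact.mk hp
  have hinjmul : Function.Injective (fun a : ZMod p => (d : ZMod p) * a) :=
    mul_right_injective₀ hd0
  set U : Finset (ZMod p) := Finset.univ \ T with hU
  have hUcard : U.card = p - t := by
    rw [hU, Finset.card_sdiff, Finset.inter_univ, Finset.card_univ, hpcard, hT]
  -- choice function for generating sets
  let g : Finset (ZMod p) → Finset (ZMod p) := fun F =>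
    if hF : ∃ A, (Finset.univ : Finset (ZMod p)) \ F = dfoldSum p d A then hF.choose else ∅
  have hg : ∀ F : Finset (ZMod p), F.card ≤ 2 * t →
      (Finset.univ : Finset (ZMod p)) \ F = dfoldSum p d (g F) := by
    intro F hF
    have hE := hcon F hF
    simp only [g, dif_pos hE]
    exact hE.choose_spec
  -- the two families
  set 𝒟 : Finset (Finset (ZMod p)) := U.powerset.filter (fun S => S.card ≤ t) with h𝒟
  set 𝒞 : Finset (Finset (ZMod p)) := U.powerset.filter (fun S => 2 * S.card < t) with h𝒞
  -- key properties of A := g (T ∪ F') for F' ∈ 𝒟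
  have key : ∀ F' ∈ 𝒟,
      (Finset.univ : Finset (ZMod p)) \ (T ∪ F') = dfoldSum p d (g (T ∪ F')) ∧
      2 * (g (T ∪ F')).card < t ∧
      ((g (T ∪ F')).image fun a => (d : ZMod p) * a) ⊆ U := by
    intro F' hF'
    rw [h𝒟, Finset.mem_filter, Finset.mem_powerset] at hF'
    have hcardF : (T ∪ F').card ≤ 2 * t := by
      calc (T ∪ F').card ≤ T.card + F'.card := Finset.card_union_le T F'
        _ ≤ t + t := by rw [hT]; exact Nat.add_le_add_left hF'.2 t
        _ = 2 * t := by ring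
    have hspec := hg (T ∪ F') hcardF
    set A := g (T ∪ F') with hA
    have hdisj : ∀ x ∈ dfoldSum p d A, x ∉ T ∪ F' := by
      intro x hx
      rw [← hspec] at hx
      exact (Finset.mem_sdiff.mp hx).2
    have hindep : IsIndepCayley p d T A := by
      intro e he hc hmem
      exact hdisj _ (sum_mem_dfoldSum p d A e he hc) (Finset.mem_union_left _ hmem)
    refine ⟨hspec, hα A hindep, ?_⟩
    intro x hx
    obtain ⟨a, ha, rfl⟩ := Finset.mem_image.mp hx
    have hmem : d • a ∈ dfoldSum p d A := smul_mem_dfoldSum p d A ha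
    have : (d : ZMod p) * a ∉ T ∪ F' := by
      have := hdisj _ hmem
      rwa [nsmul_eq_mul] at this
    rw [hU, Finset.mem_sdiff]
    exact ⟨Finset.mem_univ _, fun hxT => this (Finset.mem_union_left _ hxT)⟩
  -- the injection 𝒟 ↪ 𝒞
  have hcard_le : 𝒟.card ≤ 𝒞.card := by
    refine Finset.card_le_card_of_injOn
      (fun F' => (g (T ∪ F')).image fun a => (d : ZMod p) * a) ?_ ?_
    · intro F' hF'
      dsimp only
      obtain ⟨_, h2, h3⟩ := key F' hF'
      rw [h𝒞, Finset.mem_coe, Finset.mem_filter, Finset.mem_powerset]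
      refine ⟨h3, ?_⟩
      rw [Finset.card_image_of_injective _ hinjmul]
      omega
    · intro F₁ hF₁' F₂ hF₂' heq
      have hF₁ : F₁ ∈ 𝒟 := hF₁'
      have hF₂ : F₂ ∈ 𝒟 := hF₂'
      have hA12 : g (T ∪ F₁) = g (T ∪ F₂) := Finset.image_injective hinjmul heq
      have h1 := (key F₁ hF₁).1
      have h2 := (key F₂ hF₂).1
      rw [hA12] at h1
      have hTF : T ∪ F₁ = T ∪ F₂ := by
        have hcompl : (Finset.univ : Finset (ZMod p)) \ (T ∪ F₁) =
            Finset.univ \ (T ∪ F₂) := h1.trans h2.symm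
        have h1' : T ∪ F₁ ⊆ Finset.univ := Finset.subset_univ _
        have h2' : T ∪ F₂ ⊆ Finset.univ := Finset.subset_univ _
        ext x
        have hx := Finset.ext_iff.mp hcompl x
        simp only [Finset.mem_sdiff, Finset.mem_univ, true_and] at hx
        tauto
      -- F₁, F₂ disjoint from T, so cancel
      rw [h𝒟, Finset.mem_filter, Finset.mem_powerset] at hF₁ hF₂
      ext x
      constructor
      · intro hx
        have hxT : x ∉ T := by
          have := hF₁.1 hx
          rw [hU, Finset.mem_sdiff] at this
          exact this.2
        have : x ∈ T ∪ F₂ := hTF ▸ Finset.mem_union_right _ hx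
        rcases Finset.mem_union.mp this with h | h
        · exact absurd h hxT
        · exact h
      · intro hx
        have hxT : x ∉ T := by
          have := hF₂.1 hx
          rw [hU, Finset.mem_sdiff] at this
          exact this.2
        have : x ∈ T ∪ F₁ := hTF ▸ Finset.mem_union_right _ hx
        rcases Finset.mem_union.mp this with h | h
        · exact absurd h hxT
        · exact h
  -- but 𝒞 ⊊ 𝒟
  have hsub : 𝒞 ⊆ 𝒟 := by
    intro S hS
    rw [h𝒞, Finset.mem_filter] at hS
    rw [h𝒟, Finset.mem_filter]
    exact ⟨hS.1, by omega⟩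
  obtain ⟨S₀, hS₀U, hS₀card⟩ := Finset.exists_subset_card_eq
    (show t ≤ U.card by rw [hUcard]; omega)
  have hS₀D : S₀ ∈ 𝒟 := by
    rw [h𝒟, Finset.mem_filter, Finset.mem_powerset]
    exact ⟨hS₀U, le_of_eq hS₀card⟩
  have hS₀C : S₀ ∉ 𝒞 := by
    rw [h𝒞, Finset.mem_filter]
    rintro ⟨-, h⟩
    omega
  have : 𝒞.card < 𝒟.card :=
    Finset.card_lt_card ⟨hsub, fun h => hS₀C (h hS₀D)⟩
  omega
end
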